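/- arXiv:2011.04150 — 4 statements merged into one kernel-verified Lean document; each statement's English description precedes it below -/
import Mathlib

section
/- If f : X → Z is a finite branched covering, then the set of branch points B_f = {x ∈ X : deg(f;x) > 1} is nowhere dense in X. -/
open Set Topology

noncomputable section

/-- The degree of a map: the supremum of cardinalities of fibers. -/
def mapDeg {X Z : Type*} (f : X → Z) : ℕ∞ :=
  ⨆ z : Z, (f ⁻¹' {z}).encard

/-- The local degree of `f` at `x`: the infimum over neighborhoods `U` of `x` of
the supremum over `z ∈ f(U)` of `#(f⁻¹(z) ∩ U)`. -/
def locDeg {X Z : Type*} [TopologicalSpace X] (f : X → Z) (x : X) : ℕ∞ :=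
  ⨅ U ∈ nhds x, ⨆ z ∈ f '' U, (f ⁻¹' {z} ∩ U).encard

/-- `f : X → Z` is a finite branched covering: a finite-to-one continuous map of
finite degree such that (i) over every point the local degrees sum to the global
degree, and (ii) local degrees are locally stable: every `x₀` has compact
neighborhoods `U` of `x₀` and `V` of `f x₀` such that for every `z ∈ V` the local
degrees over `z` inside `U` sum to `deg(f; x₀)`. -/
structure IsFBC {X Z : Type*} [TopologicalSpace X] [TopologicalSpace Z]
    (f : X → Z) : Prop where
  continuous : Continuous f
  finite_fibers : ∀ z : Z, (f ⁻¹' {z}).Finite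
  deg_finite : mapDeg f ≠ ⊤
  deg_sum : ∀ z : Z, ∑ x ∈ (finite_fibers z).toFinset, locDeg f x = mapDeg f
  locDeg_stable : ∀ x₀ : X, ∃ U ∈ nhds x₀, ∃ V ∈ nhds (f x₀),
    IsCompact U ∧ IsCompact V ∧ ∀ z ∈ V,
      ∑ x ∈ ((finite_fibers z).inter_of_left U).toFinset, locDeg f x = locDeg f x₀

/-- Every local degree is at most the sup over one neighborhood. -/
lemma locDeg_le_nhds {X Z : Type*} [TopologicalSpace X] (f : X → Z) (x : X)
    {N : Set X} (hN : N ∈ nhds x) :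
    locDeg f x ≤ ⨆ z ∈ f '' N, (f ⁻¹' {z} ∩ N).encard :=
  iInf₂_le N hN

/-- Upper semicontinuity of the local degree. -/
lemma locDeg_usc {X Z : Type*} [TopologicalSpace X] [TopologicalSpace Z]
    {f : X → Z} (hf : IsFBC f) (x₀ : X) :
    ∃ N ∈ nhds x₀, ∀ x ∈ N, locDeg f x ≤ locDeg f x₀ := by
  obtain ⟨U, hU, V, hV, -, -, hstab⟩ := hf.locDeg_stable x₀
  refine ⟨U ∩ f ⁻¹' V, Filter.inter_mem hU (hf.continuous.continuousAt hV), ?_⟩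
  rintro x ⟨hxU, hxV⟩
  rw [← hstab (f x) hxV]
  refine Finset.single_le_sum (f := fun y => locDeg f y) (fun _ _ => zero_le) ?_
  rw [Set.Finite.mem_toFinset]
  exact ⟨rfl, hxU⟩

/-- The set of branch points of a finite branched covering is nowhere dense. -/
theorem fbc_branch_nowhereDense {X Z : Type*} [TopologicalSpace X]
    [TopologicalSpace Z]
    [CompactSpace X] [T2Space X] [ConnectedSpace X] [LocallyConnectedSpace X]
    [CompactSpace Z] [T2Space Z] [ConnectedSpace Z] [LocallyConnectedSpace Z]
    (f : X → Z) (hf : IsFBC f) :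
    IsNowhereDense {x : X | 1 < locDeg f x} := by
  classical
  set B := {x : X | 1 < locDeg f x} with hB
  -- B is closed, by upper semicontinuity of locDeg
  have hclosed : IsClosed B := by
    rw [← isOpen_compl_iff, isOpen_iff_mem_nhds]
    intro x hx
    obtain ⟨N, hN, hle⟩ := locDeg_usc hf x
    filter_upwards [hN] with y hy
    simp only [hB, Set.mem_compl_iff, Set.mem_setOf_eq, not_lt] at hx ⊢
    exact (hle y hy).trans hx
  rw [hclosed.isNowhereDense_iff]
  set T := interior B with hT
  by_contra hne
  replace hne : T.Nonempty := Set.nonempty_iff_ne_empty.mpr hne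
  -- pick a point of T with minimal local degree
  obtain ⟨m, ⟨x₀, hx₀T, hx₀m⟩, hmin⟩ :=
    (wellFounded_lt (α := ℕ∞)).has_min (locDeg f '' T) (hne.image _)
  have hmin' : ∀ x ∈ T, m ≤ locDeg f x := fun x hx =>
    not_lt.mp (hmin _ (Set.mem_image_of_mem _ hx))
  -- m ≥ 2
  have hx₀B : x₀ ∈ B := interior_subset hx₀T
  have hm2 : 2 ≤ m := by
    have : 1 < m := by rw [← hx₀m]; exact hx₀B
    exact Order.add_one_le_of_lt this
  -- m < ⊤
  have hmtop : m ≠ ⊤ := by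
    intro h
    apply hf.deg_finite
    rw [← hf.deg_sum (f x₀)]
    refine eq_top_iff.mpr ?_
    calc (⊤ : ℕ∞) = m := h.symm
    _ = locDeg f x₀ := hx₀m.symm
    _ ≤ _ := Finset.single_le_sum (f := fun y => locDeg f y) (fun _ _ => zero_le)
        (by simp [Set.Finite.mem_toFinset])
  -- stability data at x₀
  obtain ⟨U, hU, V, hV, -, -, hstab⟩ := hf.locDeg_stable x₀
  -- shrink to a neighborhood inside U ∩ f⁻¹ V ∩ T
  have hNmem : U ∩ f ⁻¹' V ∩ T ∈ nhds x₀ :=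
    Filter.inter_mem (Filter.inter_mem hU (hf.continuous.continuousAt hV))
      (isOpen_interior.mem_nhds hx₀T)
  set N := U ∩ f ⁻¹' V ∩ T with hN
  -- there is z ∈ f '' N with at least two preimages in N
  have hsup : 2 ≤ ⨆ z ∈ f '' N, (f ⁻¹' {z} ∩ N).encard :=
    hm2.trans (hx₀m ▸ locDeg_le_nhds f x₀ hNmem)
  have : ∃ z ∈ f '' N, 1 < (f ⁻¹' {z} ∩ N).encard := by
    by_contra h
    push_neg at h
    have hle : (⨆ z ∈ f '' N, (f ⁻¹' {z} ∩ N).encard) ≤ 1 := iSup₂_le h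
    exact absurd (hsup.trans hle) (by norm_num)
  obtain ⟨z, hzN, hz2⟩ := this
  obtain ⟨w₁, w₂, hw₁, hw₂, hne12⟩ := Set.one_lt_encard_iff.mp hz2
  -- both w₁, w₂ lie in the fiber over z intersected with U, and in T
  have hfw₁ : f w₁ = z := hw₁.1
  have hzV : z ∈ V := hfw₁ ▸ hw₁.2.1.2
  have hkey := hstab z hzV
  have hmem : ∀ w, w ∈ f ⁻¹' {z} ∩ N →
      w ∈ ((hf.finite_fibers z).inter_of_left U).toFinset := by
    rintro w ⟨hwz, ⟨hwU, -⟩, -⟩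
    simp only [Set.Finite.mem_toFinset, Set.mem_inter_iff]
    exact ⟨hwz, hwU⟩
  have hsum_ge : m + m ≤ ∑ x ∈ ((hf.finite_fibers z).inter_of_left U).toFinset,
      locDeg f x := by
    have hsub : {w₁, w₂} ⊆ ((hf.finite_fibers z).inter_of_left U).toFinset := by
      intro w hw
      rcases Finset.mem_insert.mp hw with h | h
      · exact h ▸ hmem w₁ hw₁
      · exact (Finset.mem_singleton.mp h) ▸ hmem w₂ hw₂
    calc m + m ≤ locDeg f w₁ + locDeg f w₂ :=
          add_le_add (hmin' w₁ hw₁.2.2) (hmin' w₂ hw₂.2.2)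
      _ = ∑ x ∈ ({w₁, w₂} : Finset X), locDeg f x := (Finset.sum_pair hne12).symm
      _ ≤ _ := Finset.sum_le_sum_of_subset hsub
  rw [hkey, hx₀m] at hsum_ge
  -- m + m ≤ m with 2 ≤ m < ⊤ is absurd
  have : m + m ≤ m + 0 := by simpa using hsum_ge
  have hm0 : m ≤ 0 := by
    exact (WithTop.add_le_add_iff_left hmtop).mp this
  exact absurd (hm2.trans hm0) (by norm_num)
end
end

section
/- Let J be a compact, connected, locally connected, arcwise connected metric space. If J contains a simple closed curve C and a point x not on C, then J contains a topological embedding of the letter Y (the one-point union of three arcs, i.e., a triod). -/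
open Metric Set Topology

noncomputable section

/-- Euclidean 3-space. -/
abbrev E3 : Type := EuclideanSpace ℝ (Fin 3)

/-- The endpoint `e_i` of the triod. -/
def triodPt (i : Fin 3) : E3 := EuclideanSpace.single i 1

/-- The letter "Y": the union of the three unit segments `[0, e_i]` in `ℝ³`. -/
def Triod : Set E3 := ⋃ i : Fin 3, segment ℝ 0 (triodPt i)

/-- The leg `[0, e_i]` of the triod, as a subset of the triod. -/
def triodLeg (i : Fin 3) : Set Triod := {p | (p : E3) ∈ segment ℝ 0 (triodPt i)}

/-- The endpoint `e_i`, as a point of the triod. -/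
def triodEnd (i : Fin 3) : Triod :=
  ⟨triodPt i, Set.mem_iUnion.2 ⟨i, right_mem_segment ℝ 0 (triodPt i)⟩⟩

/-- The center `o` of the triod. -/
def triodCenter : Triod :=
  ⟨0, Set.mem_iUnion.2 ⟨0, left_mem_segment ℝ 0 (triodPt 0)⟩⟩

/-- An open set `U` of a metric space has a `c`-antenna if there is a topological
embedding `h` of the triod into `U` such that for every permutation `(i,j,k)` of
`(1,2,3)` the distance from `h(e_i)` to `h([0,e_j]) ∪ h([0,e_k])` is at least
`c * diam U`. -/
def HasAntenna {X : Type*} [MetricSpace X] (c : ℝ) (U : Set X) : Prop :=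
  ∃ h : Triod → X, IsEmbedding h ∧ Set.range h ⊆ U ∧
    ∀ i j k : Fin 3, i ≠ j → j ≠ k → i ≠ k →
      c * Metric.diam U ≤
        Metric.infDist (h (triodEnd i)) (h '' (triodLeg j ∪ triodLeg k))

/-- `X` is `c`-antenna-like if every ball of radius `r < diam X / 2` has a `c`-antenna. -/
def AntennaLike (X : Type*) [MetricSpace X] (c : ℝ) : Prop :=
  ∀ (x : X) (r : ℝ), 0 < r → r < Metric.diam (Set.univ : Set X) / 2 →
    HasAntenna c (Metric.ball x r)


/-- Membership in a leg segment determines the point by its `i`-th coordinate. -/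
theorem seg_char {i : Fin 3} {q : E3} (h : q ∈ segment ℝ 0 (triodPt i)) :
    q i ∈ Icc (0:ℝ) 1 ∧ q = q i • triodPt i ∧ ∀ j, j ≠ i → q j = 0 := by
  rw [segment_eq_image] at h
  obtain ⟨t, ht, hq⟩ := h
  simp only at hq
  have hco : ∀ j, q j = if j = i then t else 0 := by
    intro j
    rw [← hq]
    simp [triodPt, EuclideanSpace.single_apply, PiLp.smul_apply, PiLp.add_apply]
  have hqi : q i = t := by rw [hco]; simp
  refine ⟨by rw [hqi]; exact ht, ?_, fun j hj => by rw [hco]; simp [hj]⟩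
  ext j
  rw [hco, hqi]
  simp [triodPt, EuclideanSpace.single_apply, PiLp.smul_apply]

theorem isCompact_seg (i : Fin 3) : IsCompact (segment ℝ 0 (triodPt i)) := by
  rw [segment_eq_image]
  exact isCompact_Icc.image (by continuity)

theorem circle_exp_inj_small {s t : ℝ} (h : |s - t| < 2 * Real.pi)
    (he : Circle.exp s = Circle.exp t) : s = t := by
  obtain ⟨m, hm⟩ := Circle.exp_eq_exp.mp he
  rcases eq_or_ne m 0 with rfl | hm0
  · simpa using hm
  · exfalso
    have h1 : |s - t| = |(m:ℝ)| * (2 * Real.pi) := by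
      rw [hm, add_sub_cancel_left, abs_mul, abs_of_pos (by positivity : (0:ℝ) < 2 * Real.pi)]
    have h2 : (1:ℝ) ≤ |(m:ℝ)| := by
      rw [← Int.cast_abs]
      exact_mod_cast Int.one_le_abs hm0
    have h3 : 2 * Real.pi ≤ |s - t| := by
      rw [h1]
      nlinarith [Real.pi_pos]
    linarith

/-- If a compact, connected, locally connected, arcwise connected metric space `J`
contains a simple closed curve (an embedded circle) missing some point `x ∈ J`,
then `J` contains a topological embedding of the triod "Y". -/
theorem triod_of_scc_and_point {J : Type*} [MetricSpace J] [CompactSpace J]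
    [ConnectedSpace J] [LocallyConnectedSpace J]
    (harc : ∀ x y : J, x ≠ y → ∃ γ : unitInterval → J,
      IsEmbedding γ ∧ γ 0 = x ∧ γ 1 = y)
    (e : Circle → J) (he : IsEmbedding e) (x : J) (hx : x ∉ Set.range e) :
    ∃ h : Triod → J, IsEmbedding h := by
  classical
  -- an arc from x to a point on the circle
  have hxp0 : x ≠ e 1 := fun h => hx ⟨1, h.symm⟩
  obtain ⟨γ, hγ, hγ0, hγ1⟩ := harc x (e 1) hxp0
  have hre : IsClosed (range e) := (isCompact_range he.continuous).isClosed
  set K : Set unitInterval := γ ⁻¹' (range e) with hK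
  have hKcl : IsClosed K := hre.preimage hγ.continuous
  have hScpt : IsCompact ((↑) '' K : Set ℝ) :=
    hKcl.isCompact.image continuous_subtype_val
  have hSne : (((↑) '' K) : Set ℝ).Nonempty :=
    ⟨1, ⟨1, by simp [hK, mem_preimage, hγ1], rfl⟩⟩
  obtain ⟨ts, htsK, hts⟩ := hScpt.sInf_mem hSne
  have hmin : ∀ t : unitInterval, γ t ∈ range e → (ts:ℝ) ≤ (t:ℝ) := by
    intro t ht
    rw [hts]; exact csInf_le hScpt.isBounded.bddBelow ⟨t, ht, rfl⟩
  have hts0 : (0:ℝ) < ts := by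
    rcases ts.2.1.lt_or_eq with h | h
    · exact h
    · exfalso; apply hx
      have h0 : ts = (0 : unitInterval) := Subtype.ext h.symm
      have hmem := mem_preimage.mp htsK
      rwa [h0, hγ0] at hmem
  obtain ⟨z0, hz0⟩ := (mem_preimage.mp htsK)
  -- the three legs
  set F0 : ℝ → J := fun t => γ (Set.projIcc 0 1 zero_le_one ((ts:ℝ) * (1 - t))) with hF0def
  set F1 : ℝ → J := fun t => e (Circle.exp t * z0) with hF1def
  set F2 : ℝ → J := fun t => e (Circle.exp (-t) * z0) with hF2def
  set F : Fin 3 → ℝ → J := fun i => if i = 0 then F0 else if i = 1 then F1 else F2 with hFdef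
  have hFeq0 : F 0 = F0 := rfl
  have hFeq1 : F 1 = F1 := rfl
  have hFeq2 : F 2 = F2 := rfl
  have hproj : ∀ t ∈ Icc (0:ℝ) 1,
      ((Set.projIcc (0:ℝ) 1 zero_le_one ((ts:ℝ) * (1 - t))) : ℝ) = (ts:ℝ) * (1 - t) := by
    intro t ht
    have hmem : (ts:ℝ) * (1 - t) ∈ Icc (0:ℝ) 1 := by
      constructor
      · have := ts.2.1; nlinarith [ht.1, ht.2]
      · have := ts.2.2; nlinarith [ht.1, ht.2]
    rw [Set.projIcc_of_mem _ hmem]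
  have hv0 : F0 0 = γ ts := by
    show γ (Set.projIcc 0 1 zero_le_one ((ts:ℝ) * (1 - 0))) = γ ts
    congr 1
    apply Subtype.ext
    rw [hproj 0 (by norm_num)]
    ring
  have hv1 : F1 0 = γ ts := by show e (Circle.exp 0 * z0) = γ ts; rw [Circle.exp_zero, one_mul, hz0]
  have hv2 : F2 0 = γ ts := by
    show e (Circle.exp (-0) * z0) = γ ts
    rw [neg_zero, Circle.exp_zero, one_mul, hz0]
  have hF0 : ∀ i, F i 0 = γ ts := by
    intro i
    fin_cases i
    · show F0 0 = γ ts; exact hv0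
    · show F1 0 = γ ts; exact hv1
    · show F2 0 = γ ts; exact hv2
  have pi_big : (2:ℝ) < 2 * Real.pi := by nlinarith [Real.pi_gt_three]
  -- injectivity of each leg on [0,1]
  have hinj0 : ∀ s ∈ Icc (0:ℝ) 1, ∀ t ∈ Icc (0:ℝ) 1, F0 s = F0 t → s = t := by
    intro s hs t ht heq
    simp only [hF0def] at heq
    have h1 := hγ.injective heq
    have h2 : (ts:ℝ) * (1 - s) = (ts:ℝ) * (1 - t) := by
      rw [← hproj s hs, ← hproj t ht, h1]
    have := mul_left_cancel₀ (ne_of_gt hts0) h2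
    linarith
  have hinj1 : ∀ s ∈ Icc (0:ℝ) 1, ∀ t ∈ Icc (0:ℝ) 1, F1 s = F1 t → s = t := by
    intro s hs t ht heq
    simp only [hF1def] at heq
    have h2 : Circle.exp s = Circle.exp t := mul_right_cancel (he.injective heq)
    exact circle_exp_inj_small
      (by rw [abs_sub_lt_iff]; constructor <;> nlinarith [hs.1, hs.2, ht.1, ht.2]) h2
  have hinj2 : ∀ s ∈ Icc (0:ℝ) 1, ∀ t ∈ Icc (0:ℝ) 1, F2 s = F2 t → s = t := by
    intro s hs t ht heq
    simp only [hF2def] at heq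
    have h2 : Circle.exp (-s) = Circle.exp (-t) := mul_right_cancel (he.injective heq)
    have := circle_exp_inj_small
      (by rw [abs_sub_lt_iff]; constructor <;> nlinarith [hs.1, hs.2, ht.1, ht.2]) h2
    linarith
  have hinj : ∀ i, ∀ s ∈ Icc (0:ℝ) 1, ∀ t ∈ Icc (0:ℝ) 1, F i s = F i t → s = t := by
    intro i
    fin_cases i
    · exact hinj0
    · exact hinj1
    · exact hinj2
  -- cross-leg intersections happen only at the center
  have key0 : ∀ s ∈ Icc (0:ℝ) 1, ∀ w : Circle, F0 s = e w → s = 0 := by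
    intro s hs w heq
    simp only [hF0def] at heq
    have hmem : γ (Set.projIcc 0 1 zero_le_one ((ts:ℝ) * (1 - s))) ∈ range e := ⟨w, heq.symm⟩
    have hle := hmin _ hmem
    rw [hproj s hs] at hle
    nlinarith [hs.1, hs.2]
  have key1 : ∀ t ∈ Icc (0:ℝ) 1, F1 t = γ ts → t = 0 := by
    intro t ht heq
    simp only [hF1def] at heq
    rw [← hz0] at heq
    have h3 : Circle.exp t * z0 = 1 * z0 := by rw [one_mul]; exact he.injective heq
    have h2 : Circle.exp t = Circle.exp 0 := by
      rw [Circle.exp_zero]; exact mul_right_cancel h3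
    exact circle_exp_inj_small
      (by rw [abs_sub_lt_iff]; constructor <;> nlinarith [ht.1, ht.2]) h2
  have key2 : ∀ t ∈ Icc (0:ℝ) 1, F2 t = γ ts → t = 0 := by
    intro t ht heq
    simp only [hF2def] at heq
    rw [← hz0] at heq
    have h3 : Circle.exp (-t) * z0 = 1 * z0 := by rw [one_mul]; exact he.injective heq
    have h2 : Circle.exp (-t) = Circle.exp 0 := by
      rw [Circle.exp_zero]; exact mul_right_cancel h3
    have := circle_exp_inj_small
      (by rw [abs_sub_lt_iff]; constructor <;> nlinarith [ht.1, ht.2]) h2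
    linarith
  have key12 : ∀ s ∈ Icc (0:ℝ) 1, ∀ t ∈ Icc (0:ℝ) 1, F1 s = F2 t → s = 0 ∧ t = 0 := by
    intro s hs t ht heq
    simp only [hF1def, hF2def] at heq
    have h2 : Circle.exp s = Circle.exp (-t) := mul_right_cancel (he.injective heq)
    have := circle_exp_inj_small
      (by rw [abs_sub_lt_iff]; constructor <;> nlinarith [hs.1, hs.2, ht.1, ht.2]) h2
    constructor <;> linarith [hs.1, ht.1]
  have hcross : ∀ i j, i ≠ j → ∀ s ∈ Icc (0:ℝ) 1, ∀ t ∈ Icc (0:ℝ) 1,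
      F i s = F j t → s = 0 ∧ t = 0 := by
    intro i j hij s hs t ht heq
    fin_cases i <;> fin_cases j <;> [skip; skip; skip; skip; skip; skip; skip; skip; skip]
    · exact absurd rfl hij
    · -- i=0 j=1
      replace heq : F0 s = F1 t := heq
      have hs0 : s = 0 := key0 s hs _ heq
      subst hs0
      rw [hv0] at heq
      exact ⟨rfl, key1 t ht heq.symm⟩
    · -- i=0 j=2
      replace heq : F0 s = F2 t := heq
      have hs0 : s = 0 := key0 s hs _ heq
      subst hs0
      rw [hv0] at heq
      exact ⟨rfl, key2 t ht heq.symm⟩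
    · -- i=1 j=0
      replace heq : F1 s = F0 t := heq
      have ht0 : t = 0 := key0 t ht _ heq.symm
      subst ht0
      rw [hv0] at heq
      exact ⟨key1 s hs heq, rfl⟩
    · exact absurd rfl hij
    · -- i=1 j=2
      replace heq : F1 s = F2 t := heq
      exact key12 s hs t ht heq
    · -- i=2 j=0
      replace heq : F2 s = F0 t := heq
      have ht0 : t = 0 := key0 t ht _ heq.symm
      subst ht0
      rw [hv0] at heq
      exact ⟨key2 s hs heq, rfl⟩
    · -- i=2 j=1
      replace heq : F2 s = F1 t := heq
      obtain ⟨h1, h2⟩ := key12 t ht s hs heq.symm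
      exact ⟨h2, h1⟩
    · exact absurd rfl hij
  -- the map on the triod
  set h : Triod → J := fun q =>
    if (q:E3) 0 ≠ 0 then F0 ((q:E3) 0)
    else if (q:E3) 1 ≠ 0 then F1 ((q:E3) 1)
    else F2 ((q:E3) 2) with hhdef
  have hval : ∀ q : Triod, h q =
      if (q:E3) 0 ≠ 0 then F0 ((q:E3) 0)
      else if (q:E3) 1 ≠ 0 then F1 ((q:E3) 1)
      else F2 ((q:E3) 2) := fun q => rfl
  have hleg : ∀ (i : Fin 3) (q : Triod), (q:E3) ∈ segment ℝ 0 (triodPt i) →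
      h q = F i ((q:E3) i) := by
    intro i q hq
    obtain ⟨hqi, hrep, hz⟩ := seg_char hq
    rw [hval q]
    fin_cases i
    · show _ = F0 ((q:E3) 0)
      have h1 : (q:E3) 1 = 0 := hz 1 (by decide)
      have h2 : (q:E3) 2 = 0 := hz 2 (by decide)
      by_cases h0 : (q:E3) 0 = 0
      · rw [if_neg (not_not_intro h0), if_neg (not_not_intro h1), h2, h0, hv2, hv0]
      · rw [if_pos h0]
    · show _ = F1 ((q:E3) 1)
      have h0 : (q:E3) 0 = 0 := hz 0 (by decide)
      have h2 : (q:E3) 2 = 0 := hz 2 (by decide)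
      by_cases h1 : (q:E3) 1 = 0
      · rw [if_neg (not_not_intro h0), if_neg (not_not_intro h1), h2, h1, hv2, hv1]
      · rw [if_neg (not_not_intro h0), if_pos h1]
    · show _ = F2 ((q:E3) 2)
      have h0 : (q:E3) 0 = 0 := hz 0 (by decide)
      have h1 : (q:E3) 1 = 0 := hz 1 (by decide)
      rw [if_neg (not_not_intro h0), if_neg (not_not_intro h1)]
  -- continuity
  have hc0 : Continuous F0 := by
    simp only [hF0def]
    exact hγ.continuous.comp (continuous_projIcc.comp
      (continuous_const.mul (continuous_const.sub continuous_id)))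
  have hc1 : Continuous F1 := by
    simp only [hF1def]
    exact he.continuous.comp ((map_continuous Circle.exp).mul continuous_const)
  have hc2 : Continuous F2 := by
    simp only [hF2def]
    exact he.continuous.comp
      (((map_continuous Circle.exp).comp continuous_neg).mul continuous_const)
  have hFc : ∀ i, Continuous (F i) := by
    intro i
    fin_cases i
    · exact hc0
    · exact hc1
    · exact hc2
  have hcoord : ∀ i : Fin 3, Continuous fun q : Triod => (q:E3) i := fun i =>
    ((EuclideanSpace.proj i : E3 →L[ℝ] ℝ).continuous).comp continuous_subtype_val
  have hcov : ⋃ i, (triodLeg i) = (univ : Set Triod) := by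
    ext q
    simp only [mem_iUnion, mem_univ, iff_true, triodLeg, mem_setOf_eq]
    exact mem_iUnion.mp q.2
  have hclosed : ∀ i, IsClosed (triodLeg i) := fun i =>
    (isCompact_seg i).isClosed.preimage continuous_subtype_val
  have hcont : Continuous h := by
    apply (locallyFinite_of_finite triodLeg).continuous hcov hclosed
    intro i
    apply ContinuousOn.congr (f := fun q : Triod => F i ((q:E3) i))
      (((hFc i).comp (hcoord i)).continuousOn)
    intro q hq
    exact hleg i q hq
  -- injectivity
  have hinjh : Function.Injective h := by
    intro q q' heq
    obtain ⟨i, hi⟩ := mem_iUnion.mp q.2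
    obtain ⟨j, hj⟩ := mem_iUnion.mp q'.2
    rw [hleg i q hi, hleg j q' hj] at heq
    obtain ⟨hqi, hqrep, _⟩ := seg_char hi
    obtain ⟨hq'j, hq'rep, _⟩ := seg_char hj
    rcases eq_or_ne i j with rfl | hij
    · have := hinj i _ hqi _ hq'j heq
      apply Subtype.ext
      rw [hqrep, hq'rep, this]
    · obtain ⟨h1, h2⟩ := hcross i j hij _ hqi _ hq'j heq
      apply Subtype.ext
      rw [hqrep, hq'rep, h1, h2]
      simp
  haveI : CompactSpace Triod :=
    isCompact_iff_compactSpace.mp (isCompact_iUnion isCompact_seg)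
  exact ⟨h, (hcont.isClosedEmbedding hinjh).isEmbedding⟩
end
end

section
/- Let f : [0,1] → [0,1] be a continuous open map, and let x ∈ (0,1) be a point at which f is not locally injective (a branch point). Then f(x) ∈ {0,1} and f attains a local maximum or local minimum at x. -/
open unitInterval

/-- An open subset of `[0,1]` containing a maximal element `m` forces `m = 1`. -/
lemma branch_aux_top (U : Set unitInterval) (hU : IsOpen U) (m : unitInterval)
    (hm : m ∈ U) (hmax : ∀ y ∈ U, y ≤ m) : m = 1 := by
  by_contra h1
  have hmlt : (m : ℝ) < 1 := lt_of_le_of_ne m.2.2 (fun h => h1 (Subtype.ext h))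
  obtain ⟨ε, hε, hball⟩ := Metric.isOpen_iff.mp hU m hm
  set δ : ℝ := min (ε / 2) ((1 - m) / 2) with hδ
  have hδpos : 0 < δ := lt_min (by linarith) (by linarith)
  have hmem : (m : ℝ) + δ ∈ Set.Icc (0:ℝ) 1 := by
    constructor
    · have := m.2.1; linarith
    · have : δ ≤ (1 - m) / 2 := min_le_right _ _
      linarith
  set y : unitInterval := ⟨(m : ℝ) + δ, hmem⟩ with hy
  have hyU : y ∈ U := by
    apply hball
    rw [Metric.mem_ball, Subtype.dist_eq]
    have : δ ≤ ε / 2 := min_le_left _ _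
    simp only [hy, Real.dist_eq]
    rw [abs_of_pos (by linarith : (0:ℝ) < (m:ℝ) + δ - m)]
    linarith
  have := hmax y hyU
  have : (m : ℝ) + δ ≤ m := this
  linarith

/-- An open subset of `[0,1]` containing a minimal element `m` forces `m = 0`. -/
lemma branch_aux_bot (U : Set unitInterval) (hU : IsOpen U) (m : unitInterval)
    (hm : m ∈ U) (hmin : ∀ y ∈ U, m ≤ y) : m = 0 := by
  by_contra h0
  have hmgt : (0 : ℝ) < m := lt_of_le_of_ne m.2.1 (fun h => h0 (Subtype.ext h.symm))
  obtain ⟨ε, hε, hball⟩ := Metric.isOpen_iff.mp hU m hm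
  set δ : ℝ := min (ε / 2) ((m : ℝ) / 2) with hδ
  have hδpos : 0 < δ := lt_min (by linarith) (by linarith)
  have hmem : (m : ℝ) - δ ∈ Set.Icc (0:ℝ) 1 := by
    constructor
    · have : δ ≤ (m : ℝ) / 2 := min_le_right _ _
      linarith
    · have := m.2.2; linarith
  set y : unitInterval := ⟨(m : ℝ) - δ, hmem⟩ with hy
  have hyU : y ∈ U := by
    apply hball
    rw [Metric.mem_ball, Subtype.dist_eq]
    have : δ ≤ ε / 2 := min_le_left _ _
    simp only [hy, Real.dist_eq]
    rw [abs_of_neg (by linarith : (m:ℝ) - δ - m < 0)]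
    linarith
  have := hmin y hyU
  have : (m : ℝ) ≤ (m : ℝ) - δ := this
  linarith

/-- Between two points with the same image, a continuous open map hits `0` or `1`. -/
lemma branch_aux_key (f : unitInterval → unitInterval)
    (hc : Continuous f) (ho : IsOpenMap f) (u v : unitInterval)
    (huv : u < v) (hfuv : f u = f v) :
    ∃ c, u < c ∧ c < v ∧ (f c = 0 ∨ f c = 1) := by
  have hKc : IsCompact (Set.Icc u v) := isClosed_Icc.isCompact
  have hne : (Set.Icc u v).Nonempty := ⟨u, le_refl u, le_of_lt huv⟩
  obtain ⟨cM, hcM, hmaxM⟩ := hKc.exists_isMaxOn hne hc.continuousOn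
  obtain ⟨cm, hcm, hminm⟩ := hKc.exists_isMinOn hne hc.continuousOn
  have hopenIoo : IsOpen (f '' Set.Ioo u v) := ho _ isOpen_Ioo
  by_cases hM : f cM = f u
  · by_cases hm : f cm = f u
    · -- f is constant on Icc u v, so f '' Ioo u v is a singleton: contradiction
      exfalso
      have hconst : ∀ y ∈ Set.Icc u v, f y = f u := by
        intro y hy
        have h1 : f y ≤ f cM := hmaxM hy
        have h2 : f cm ≤ f y := hminm hy
        rw [hM] at h1; rw [hm] at h2
        exact le_antisymm h1 h2
      have himg : f '' Set.Ioo u v = {f u} := by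
        apply Set.eq_singleton_iff_nonempty_unique_mem.mpr
        constructor
        · obtain ⟨z, hz⟩ := Set.nonempty_Ioo.mpr huv
          exact ⟨f z, ⟨z, hz, rfl⟩⟩
        · rintro w ⟨z, hz, rfl⟩
          exact hconst z ⟨le_of_lt hz.1, le_of_lt hz.2⟩
      rw [himg] at hopenIoo
      have hclopen : IsClopen ({f u} : Set unitInterval) :=
        ⟨isClosed_singleton, hopenIoo⟩
      rcases isClopen_iff.mp hclopen with h | h
      · exact (Set.singleton_nonempty _).ne_empty h
      · have h0 : (0 : unitInterval) ∈ ({f u} : Set unitInterval) := h ▸ Set.mem_univ _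
        have h1 : (1 : unitInterval) ∈ ({f u} : Set unitInterval) := h ▸ Set.mem_univ _
        rw [Set.mem_singleton_iff] at h0 h1
        have : (0 : unitInterval) = 1 := h0.trans h1.symm
        have := congrArg (Subtype.val) this
        norm_num at this
    · -- minimum is strictly below f u, attained in the interior; it must be 0
      have hcmIoo : cm ∈ Set.Ioo u v := by
        rcases hcm with ⟨h1, h2⟩
        constructor
        · rcases lt_or_eq_of_le h1 with h | h
          · exact h
          · exact absurd (h ▸ rfl : f cm = f u) hm
        · rcases lt_or_eq_of_le h2 with h | h
          · exact h
          · exact absurd ((congrArg f h).trans hfuv.symm) hm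
      refine ⟨cm, hcmIoo.1, hcmIoo.2, Or.inl ?_⟩
      apply branch_aux_bot _ hopenIoo
      · exact ⟨cm, hcmIoo, rfl⟩
      · rintro y ⟨z, hz, rfl⟩
        exact hminm ⟨le_of_lt hz.1, le_of_lt hz.2⟩
  · -- maximum is strictly above f u, attained in the interior; it must be 1
    have hcMIoo : cM ∈ Set.Ioo u v := by
      rcases hcM with ⟨h1, h2⟩
      constructor
      · rcases lt_or_eq_of_le h1 with h | h
        · exact h
        · exact absurd (h ▸ rfl : f cM = f u) hM
      · rcases lt_or_eq_of_le h2 with h | h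
        · exact h
        · exact absurd ((congrArg f h).trans hfuv.symm) hM
    refine ⟨cM, hcMIoo.1, hcMIoo.2, Or.inr ?_⟩
    apply branch_aux_top _ hopenIoo
    · exact ⟨cM, hcMIoo, rfl⟩
    · rintro y ⟨z, hz, rfl⟩
      exact hmaxM ⟨le_of_lt hz.1, le_of_lt hz.2⟩

/-- If `f` is a continuous open self-map of `[0,1]` and `x ∈ (0,1)` is a branch
point (i.e., `f` is injective on no neighborhood of `x`), then `f x ∈ {0,1}` and
`f` attains a local maximum or a local minimum at `x`. -/
theorem branch_point_extremum (f : unitInterval → unitInterval)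
    (hc : Continuous f) (ho : IsOpenMap f) (x : unitInterval)
    (hx0 : 0 < (x : ℝ)) (hx1 : (x : ℝ) < 1)
    (hbr : ∀ U ∈ nhds x, ¬ Set.InjOn f U) :
    (f x = 0 ∨ f x = 1) ∧ (IsLocalMax f x ∨ IsLocalMin f x) := by
  -- Step 1: arbitrarily close to `x` there are points mapping to 0 or 1.
  have hstep : ∀ ε : ℝ, 0 < ε → ∃ c : unitInterval, dist c x < ε ∧ (f c = 0 ∨ f c = 1) := by
    intro ε hε
    have hball : Metric.ball x ε ∈ nhds x := Metric.ball_mem_nhds x hε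
    have hninj := hbr _ hball
    rw [Set.InjOn] at hninj
    push_neg at hninj
    obtain ⟨a, ha, b, hb, hab, hne⟩ := hninj
    rcases lt_or_gt_of_ne hne with h | h
    · obtain ⟨c, hc1, hc2, hc01⟩ := branch_aux_key f hc ho a b h hab
      refine ⟨c, ?_, hc01⟩
      rw [Metric.mem_ball, Subtype.dist_eq, Real.dist_eq] at ha hb
      rw [Subtype.dist_eq, Real.dist_eq]
      have h1 : (a : ℝ) ≤ c := le_of_lt hc1
      have h2 : (c : ℝ) ≤ b := le_of_lt hc2
      rw [abs_lt] at ha hb ⊢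
      constructor <;> [linarith [ha.1]; linarith [hb.2]]
    · obtain ⟨c, hc1, hc2, hc01⟩ := branch_aux_key f hc ho b a h hab.symm
      refine ⟨c, ?_, hc01⟩
      rw [Metric.mem_ball, Subtype.dist_eq, Real.dist_eq] at ha hb
      rw [Subtype.dist_eq, Real.dist_eq]
      have h1 : (b : ℝ) ≤ c := le_of_lt hc1
      have h2 : (c : ℝ) ≤ a := le_of_lt hc2
      rw [abs_lt] at ha hb ⊢
      constructor <;> [linarith [hb.1]; linarith [ha.2]]
  -- Step 2: conclude `f x ∈ {0,1}` by continuity.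
  choose g hg hg01 using fun n : ℕ => hstep (1 / (n + 1)) (by positivity)
  have hgx : Filter.Tendsto g Filter.atTop (nhds x) := by
    rw [Metric.tendsto_atTop]
    intro ε hε
    obtain ⟨N, hN⟩ := exists_nat_one_div_lt hε
    refine ⟨N, fun n hn => lt_of_lt_of_le (hg n) ?_⟩
    have hNn : ((N : ℝ) + 1) ≤ (n : ℝ) + 1 := by exact_mod_cast Nat.succ_le_succ hn
    exact (one_div_le_one_div_of_le (by positivity) hNn).trans hN.le
  have hfgx : Filter.Tendsto (f ∘ g) Filter.atTop (nhds (f x)) :=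
    (hc.tendsto x).comp hgx
  have hclosed : IsClosed ({0, 1} : Set unitInterval) :=
    (Set.Finite.insert _ (Set.finite_singleton _)).isClosed
  have hmem : f x ∈ ({0, 1} : Set unitInterval) :=
    hclosed.mem_of_tendsto hfgx (Filter.Eventually.of_forall fun n => hg01 n)
  have h01 : f x = 0 ∨ f x = 1 := hmem
  refine ⟨h01, ?_⟩
  rcases h01 with h | h
  · exact Or.inr (Filter.Eventually.of_forall fun y => h ▸ (f y).2.1)
  · exact Or.inl (Filter.Eventually.of_forall fun y => h ▸ (f y).2.2)
end

section
/- Having a c-antenna is a quasi-symmetric invariant up to a change of constant: if h : X → Z is an η-quasi-symmetric homeomorphism of compact connected metric spaces and X is c-antenna-like, then Z is c'-antenna-like for some c' ∈ (0,1) depending only on η and c. -/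
open Metric Set Topology

noncomputable section

open NNReal

/-- A map `h : X → Z` between metric spaces is `η`-quasi-symmetric if for all
`x, y, z` with `x ≠ z` we have
`d(h x, h y) / d(h x, h z) ≤ η (d(x,y) / d(x,z))`. -/
def IsQS {X Z : Type*} [MetricSpace X] [MetricSpace Z] (η : ℝ≥0 → ℝ≥0)
    (h : X → Z) : Prop :=
  ∀ x y z : X, x ≠ z →
    nndist (h x) (h y) / nndist (h x) (h z) ≤ η (nndist x y / nndist x z)

/-- A self-homeomorphism of `ℝ≥0` is strictly monotone. -/
lemma homeo_nnreal_strictMono (η : ℝ≥0 ≃ₜ ℝ≥0) : StrictMono ⇑η := by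
  rcases η.continuous.strictMono_of_inj η.injective with hm | hm
  · exact hm
  · exfalso
    obtain ⟨x, hx⟩ := η.surjective (η 0 + 1)
    have h2 : η x ≤ η 0 := hm.antitone (zero_le : (0:ℝ≥0) ≤ x)
    rw [hx] at h2
    simp at h2

lemma homeo_nnreal_map_zero (η : ℝ≥0 ≃ₜ ℝ≥0) : η 0 = 0 := by
  obtain ⟨x, hx⟩ := η.surjective 0
  have h2 := (homeo_nnreal_strictMono η).monotone (zero_le : (0:ℝ≥0) ≤ x)
  rw [hx] at h2
  exact le_antisymm h2 (zero_le : (0:ℝ≥0) ≤ η 0)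

/-- In a compact connected metric space, every value `r < diam/2` is attained as a
distance from any fixed point. -/
lemma exists_dist_eq' {Z : Type*} [MetricSpace Z] [CompactSpace Z] [ConnectedSpace Z]
    (z₀ : Z) {r : ℝ} (h0 : 0 ≤ r) (hr : r < Metric.diam (Set.univ : Set Z) / 2) :
    ∃ w, dist z₀ w = r := by
  obtain ⟨wm, -, hwm⟩ := isCompact_univ.exists_isMaxOn (f := fun y => dist z₀ y)
    univ_nonempty (Continuous.continuousOn (by fun_prop))
  have hd : Metric.diam (Set.univ : Set Z) ≤ 2 * dist z₀ wm := by
    refine Metric.diam_le_of_forall_dist_le (by positivity) fun a _ b _ => ?_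
    have h1 : dist a z₀ ≤ dist z₀ wm := by simpa [dist_comm] using hwm (mem_univ a)
    have h2 : dist z₀ b ≤ dist z₀ wm := hwm (mem_univ b)
    calc dist a b ≤ dist a z₀ + dist z₀ b := dist_triangle _ _ _
      _ ≤ 2 * dist z₀ wm := by linarith
  have hrm : r ≤ dist z₀ wm := by linarith
  have := intermediate_value_univ z₀ wm (f := fun w => dist z₀ w)
    (continuous_const.dist continuous_id)
  obtain ⟨w, hw⟩ := this ⟨by simpa using h0, hrm⟩
  exact ⟨w, hw⟩

/-- Being antenna-like is a quasi-symmetric invariant up to a change of constant: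
if `h : X ≃ₜ Z` is an `η`-quasi-symmetric homeomorphism of compact connected
metric spaces and `X` is `c`-antenna-like, then `Z` is `c'`-antenna-like for some
`c' ∈ (0,1)`. -/
theorem antennaLike_qs_invariant {X Z : Type*} [MetricSpace X] [MetricSpace Z]
    [CompactSpace X] [ConnectedSpace X] [CompactSpace Z] [ConnectedSpace Z]
    (η : ℝ≥0 ≃ₜ ℝ≥0) (h : X ≃ₜ Z) (hqs : IsQS (⇑η) ⇑h)
    (c : ℝ) (hc0 : 0 < c) (hc1 : c < 1) (hX : AntennaLike X c) :
    ∃ c' : ℝ, 0 < c' ∧ c' < 1 ∧ AntennaLike Z c' := by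
  have ηmono : Monotone ⇑η := (homeo_nnreal_strictMono η).monotone
  have η0 : η 0 = 0 := homeo_nnreal_map_zero η
  set cn : ℝ≥0 := ⟨c, hc0.le⟩ with hcn
  have hcn0 : cn ≠ 0 := by
    simp only [← NNReal.coe_ne_zero, hcn, NNReal.coe_mk]
    exact fun h0 => hc0.ne' (congrArg NNReal.toReal h0 : _)
  set θ : ℝ≥0 := min (η.symm 4⁻¹) 4⁻¹ with hθdef
  have hθ0 : 0 < θ := by
    refine lt_min ?_ (by norm_num)
    rcases eq_or_lt_of_le (zero_le : (0:ℝ≥0) ≤ η.symm 4⁻¹) with he | he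
    · exfalso
      have : η (η.symm 4⁻¹) = η 0 := by rw [← he]
      rw [η.apply_symm_apply, η0] at this
      norm_num at this
    · exact he
  have hθ4 : (θ : ℝ) ≤ 4⁻¹ := by
    have : θ ≤ 4⁻¹ := min_le_right _ _
    exact_mod_cast this
  have hθ1 : (θ : ℝ) ≤ 1 := by linarith
  set K : ℝ≥0 := η (4 / (cn * θ)) + 1 with hKdef
  have hK1 : (1 : ℝ≥0) ≤ K := le_add_self
  have hK0 : (0 : ℝ) < (K : ℝ) := by
    have : (1 : ℝ) ≤ (K : ℝ) := by exact_mod_cast hK1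
    linarith
  refine ⟨min ((4 * (K : ℝ)))⁻¹ 2⁻¹, ?_, ?_, ?_⟩
  · apply lt_min (by positivity) (by norm_num)
  · exact lt_of_le_of_lt (min_le_right _ _) (by norm_num)
  intro z₀ r hr hrZ
  -- pick w at distance exactly r from z₀
  obtain ⟨w, hw⟩ := exists_dist_eq' z₀ hr.le hrZ
  set x₀ := h.symm z₀ with hx₀def
  set x₁ := h.symm w with hx₁def
  have hhx₀ : h x₀ = z₀ := h.apply_symm_apply z₀
  have hhx₁ : h x₁ = w := h.apply_symm_apply w
  have hz₀w : z₀ ≠ w := by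
    intro he; rw [← he, dist_self] at hw; exact hr.ne hw
  have hx01 : x₀ ≠ x₁ := fun he => hz₀w (by rw [← hhx₀, ← hhx₁, he])
  set D := dist x₀ x₁ with hDdef
  have hD0 : 0 < D := dist_pos.2 hx01
  set s := (θ : ℝ) * D with hsdef
  have hs0 : 0 < s := by positivity
  have hDdiam : D ≤ Metric.diam (Set.univ : Set X) :=
    Metric.dist_le_diam_of_mem isCompact_univ.isBounded trivial trivial
  have hdiamX0 : 0 < Metric.diam (Set.univ : Set X) := lt_of_lt_of_le hD0 hDdiam
  have hs2 : s < Metric.diam (Set.univ : Set X) / 2 := by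
    have : s ≤ D / 4 := by
      rw [hsdef]; nlinarith
    nlinarith
  -- the antenna in X
  obtain ⟨e, he_emb, he_range, he_sep⟩ := hX x₀ s hs0 hs2
  -- lower bound on diam of the ball in X
  have hdiamball : s / 2 ≤ Metric.diam (Metric.ball x₀ s) := by
    obtain ⟨p, hp⟩ := exists_dist_eq' x₀ (by positivity : (0:ℝ) ≤ 3 / 4 * s) (by linarith)
    have hpball : p ∈ Metric.ball x₀ s := by
      rw [Metric.mem_ball, dist_comm, hp]; linarith
    have := Metric.dist_le_diam_of_mem Metric.isBounded_ball hpball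
      (Metric.mem_ball_self hs0)
    rw [dist_comm, hp] at this
    linarith
  -- forward containment : h maps ball x₀ s into ball z₀ (r/4)
  have hcont : ∀ x : X, dist x₀ x < s → dist z₀ (h x) ≤ r / 4 := by
    intro x hx
    have hq := hqs x₀ x x₁ hx01
    rw [hhx₀, hhx₁] at hq
    have harg : nndist x₀ x / nndist x₀ x₁ ≤ θ := by
      rw [div_le_iff₀ (by simpa using hx01 : nndist x₀ x₁ ≠ 0).bot_lt]
      rw [← NNReal.coe_le_coe]
      push_cast
      exact hx.le
    have hη : η (nndist x₀ x / nndist x₀ x₁) ≤ 4⁻¹ := by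
      calc η (nndist x₀ x / nndist x₀ x₁) ≤ η θ := ηmono harg
        _ ≤ η (η.symm 4⁻¹) := ηmono (min_le_left _ _)
        _ = 4⁻¹ := η.apply_symm_apply _
    have hq2 : nndist z₀ (h x) / nndist z₀ w ≤ 4⁻¹ := le_trans hq hη
    rw [div_le_iff₀ (by simpa using hz₀w : nndist z₀ w ≠ 0).bot_lt] at hq2
    have : dist z₀ (h x) ≤ 4⁻¹ * dist z₀ w := by
      rw [← coe_nndist, ← coe_nndist]
      exact_mod_cast hq2
    rw [hw] at this
    linarith
  refine ⟨(h : X → Z) ∘ e, (h.isEmbedding).comp he_emb, ?_, ?_⟩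
  · rintro y ⟨t, rfl⟩
    have het : e t ∈ Metric.ball x₀ s := he_range ⟨t, rfl⟩
    rw [Metric.mem_ball] at het ⊢
    rw [dist_comm] at het ⊢
    calc dist z₀ (h (e t)) ≤ r / 4 := hcont _ het
      _ < r := by linarith
  · intro i j k hij hjk hik
    have hsep := he_sep i j k hij hjk hik
    set p' := e (triodEnd i) with hp'def
    have hp'ball : p' ∈ Metric.ball x₀ s := he_range ⟨_, rfl⟩
    -- bound infDist from below pointwise
    have hne : ((⇑h ∘ e) '' (triodLeg j ∪ triodLeg k)).Nonempty := by
      refine ⟨(⇑h ∘ e) triodCenter, ⟨triodCenter, ?_, rfl⟩⟩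
      exact Or.inl (left_mem_segment ℝ 0 (triodPt j))
    rw [Metric.infDist_eq_iInf]
    have : Nonempty ((⇑h ∘ e) '' (triodLeg j ∪ triodLeg k)) := hne.to_subtype
    refine le_ciInf fun ⟨y, hy⟩ => ?_
    obtain ⟨t, ht, rfl⟩ := hy
    set q' := e t with hq'def
    have hq'ball : q' ∈ Metric.ball x₀ s := he_range ⟨t, rfl⟩
    -- distance in X between p' and q'
    have hdistX : c * (s / 2) ≤ dist p' q' := by
      have h1 : c * Metric.diam (Metric.ball x₀ s) ≤ dist p' q' :=
        le_trans hsep (Metric.infDist_le_dist_of_mem ⟨t, ht, rfl⟩)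
      nlinarith
    have hpq : p' ≠ q' := by
      intro he
      rw [he, dist_self] at hdistX
      nlinarith
    -- QS estimate
    have hq := hqs p' x₁ q' hpq
    rw [hhx₁] at hq
    have harg : nndist p' x₁ / nndist p' q' ≤ 4 / (cn * θ) := by
      rw [div_le_iff₀ (by simpa using hpq : nndist p' q' ≠ 0).bot_lt]
      rw [← NNReal.coe_le_coe]
      push_cast
      rw [show ((cn : ℝ)) = c from rfl]
      have h1 : dist p' x₁ ≤ 2 * D := by
        have hp1 : dist x₀ p' < s := by rw [Metric.mem_ball, dist_comm] at hp'ball; exact hp'ball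
        calc dist p' x₁ ≤ dist p' x₀ + dist x₀ x₁ := dist_triangle _ _ _
          _ ≤ s + D := by rw [dist_comm]; linarith
          _ ≤ 2 * D := by nlinarith
      rw [div_mul_eq_mul_div, le_div_iff₀ (by positivity : (0:ℝ) < c * ↑θ)]
      -- dist p' x₁ * (c * θ) ≤ 4 * dist p' q'
      have e1 : dist p' x₁ * (c * θ) ≤ 2 * D * (c * θ) :=
        mul_le_mul_of_nonneg_right h1 (by positivity)
      have e2 : 2 * D * (c * θ) = 4 * (c * (s / 2)) := by rw [hsdef]; ring
      linarith [hdistX]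
    have hηK : η (nndist p' x₁ / nndist p' q') ≤ K := by
      calc η (nndist p' x₁ / nndist p' q') ≤ η (4 / (cn * θ)) := ηmono harg
        _ ≤ K := le_self_add
    have hq2 : nndist (h p') w / nndist (h p') (h q') ≤ K := le_trans hq hηK
    have hhpq : h p' ≠ h q' := fun he => hpq (h.injective he)
    rw [div_le_iff₀ (by simpa using hhpq : nndist (h p') (h q') ≠ 0).bot_lt] at hq2
    have hq3 : dist (h p') w ≤ (K : ℝ) * dist (h p') (h q') := by
      rw [← coe_nndist, ← coe_nndist]
      exact_mod_cast hq2
    -- lower bound on dist (h p') w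
    have hp'near : dist z₀ (h p') ≤ r / 4 := by
      apply hcont
      rw [Metric.mem_ball, dist_comm] at hp'ball
      exact hp'ball
    have hlow : 3 * r / 4 ≤ dist (h p') w := by
      have htr := dist_triangle z₀ (h p') w
      rw [hw] at htr
      linarith [hp'near]
    -- conclude
    have hdZball : Metric.diam (Metric.ball z₀ r) ≤ 2 * r := Metric.diam_ball hr.le
    have hfinal : min ((4 * (K : ℝ)))⁻¹ 2⁻¹ * Metric.diam (Metric.ball z₀ r)
        ≤ dist (h p') (h (e t)) := by
      have hmin : min ((4 * (K : ℝ)))⁻¹ 2⁻¹ ≤ (4 * (K : ℝ))⁻¹ := min_le_left _ _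
      have hmnn : (0:ℝ) ≤ min ((4 * (K : ℝ)))⁻¹ 2⁻¹ := le_min (by positivity) (by norm_num)
      have h4 : dist (h p') (h (e t)) ≥ (3 * r / 4) / K := by
        rw [ge_iff_le, div_le_iff₀ hK0]
        calc 3 * r / 4 ≤ dist (h p') w := hlow
          _ ≤ (K : ℝ) * dist (h p') (h (e t)) := hq3
          _ = dist (h p') (h (e t)) * K := mul_comm _ _
      calc min ((4 * (K : ℝ)))⁻¹ 2⁻¹ * Metric.diam (Metric.ball z₀ r)
          ≤ (4 * (K : ℝ))⁻¹ * (2 * r) := by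
            apply mul_le_mul hmin hdZball Metric.diam_nonneg (by positivity)
        _ ≤ (3 * r / 4) / K := by
            rw [div_eq_mul_inv, mul_inv]
            have : (0:ℝ) < (K:ℝ)⁻¹ := by positivity
            nlinarith
        _ ≤ dist (h p') (h (e t)) := h4
    exact hfinal
end
end
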